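/- If a finite simplicial graph Γ with at least two vertices is not a join, then there exists a finite sequence of vertices s_1, s_2, ..., s_k such that consecutive vertices s_i, s_{i+1} are non-adjacent in Γ, s_k and s_1 are non-adjacent in Γ, the sequence visits every vertex of Γ at least once, and the intersection of the neighborhoods (links) of the s_i in Γ is empty. -/

import Mathlib

def SimpleGraph.IsJoinDecomp {V : Type*} (Γ : SimpleGraph V) (S₁ S₂ : Set V) : Prop :=
  S₁.Nonempty ∧ S₂.Nonempty ∧ Disjoint S₁ S₂ ∧ S₁ ∪ S₂ = Set.univ ∧
    ∀ s ∈ S₁, ∀ t ∈ S₂, Γ.Adj s t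

private lemma exists_tour {V : Type*} (G : SimpleGraph V) (hc : G.Preconnected) (v : V)
    (l : List V) : ∃ w : G.Walk v v, ∀ x ∈ l, x ∈ w.support := by
  induction l with
  | nil => exact ⟨SimpleGraph.Walk.nil, by simp⟩
  | cons x xs ih =>
    obtain ⟨w, hw⟩ := ih
    let p : G.Walk v x := (hc v x).some
    refine ⟨(p.append p.reverse).append w, ?_⟩
    intro y hy
    rw [List.mem_cons] at hy
    rw [SimpleGraph.Walk.mem_support_append_iff]
    rcases hy with rfl | hy
    · rw [SimpleGraph.Walk.mem_support_append_iff]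
      exact Or.inl (Or.inl p.end_mem_support)
    · exact Or.inr (hw _ hy)

/-- if a finite graph `Γ` with at least two vertices is not a join, then there
is a finite sequence of vertices `s 0, …, s k` such that consecutive vertices are distinct
and non-adjacent, the last and first are distinct and non-adjacent, the sequence visits
every vertex, and the intersection of the links of the `s i` is empty. -/
theorem exists_closed_walk_in_complement {V : Type*} [Fintype V]
    (Γ : SimpleGraph V) (hV : 2 ≤ Fintype.card V)
    (hnj : ¬ ∃ S₁ S₂ : Set V, Γ.IsJoinDecomp S₁ S₂) :
    ∃ (k : ℕ) (s : Fin (k + 1) → V),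
      (∀ i : Fin k, s i.castSucc ≠ s i.succ ∧ ¬ Γ.Adj (s i.castSucc) (s i.succ)) ∧
      (s (Fin.last k) ≠ s 0 ∧ ¬ Γ.Adj (s (Fin.last k)) (s 0)) ∧
      Function.Surjective s ∧
      (⋂ i : Fin (k + 1), Γ.neighborSet (s i)) = ∅ := by
  classical
  set G := Γᶜ with hG
  -- the complement is preconnected
  have hc : G.Preconnected := by
    by_contra h
    simp only [SimpleGraph.Preconnected, not_forall] at h
    obtain ⟨u, v, huv⟩ := h
    refine hnj ⟨{x | G.Reachable u x}, {x | G.Reachable u x}ᶜ, ⟨u, SimpleGraph.Reachable.refl u⟩,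
      ⟨v, huv⟩, disjoint_compl_right, Set.union_compl_self _, ?_⟩
    intro s hs t ht
    by_contra hadj
    have hne : s ≠ t := fun h => ht (h ▸ hs)
    have : G.Adj s t := (Γ.compl_adj s t).mpr ⟨hne, hadj⟩
    exact ht (hs.trans this.reachable)
  -- pick two distinct vertices
  obtain ⟨u, v, huv⟩ := Fintype.exists_pair_of_one_lt_card hV
  obtain ⟨w, hw⟩ := exists_tour G hc u Finset.univ.toList
  have hwall : ∀ x : V, x ∈ w.support := fun x => hw x (by simp)
  have hlenpos : 0 < w.length := by
    rcases Nat.eq_zero_or_pos w.length with h0 | h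
    · exfalso
      have : w.Nil := SimpleGraph.Walk.nil_iff_length_eq.mpr h0
      have hv := hwall v
      have hu := hwall u
      cases w with
      | nil => simp at hv; exact huv hv.symm
      | cons h p => exact SimpleGraph.Walk.not_nil_cons this
    · exact h
  obtain ⟨k, hk⟩ : ∃ k, w.length = k + 1 := ⟨w.length - 1, (Nat.succ_pred_eq_of_pos hlenpos).symm⟩
  have hsurj : Function.Surjective (fun i : Fin (k+1) => w.getVert i) := by
    intro x
    obtain ⟨n, hnx, hn⟩ := SimpleGraph.Walk.mem_support_iff_exists_getVert.mp (hwall x)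
    rcases Nat.lt_or_ge n (k+1) with h | h
    · exact ⟨⟨n, h⟩, hnx⟩
    · have : n = w.length := by omega
      refine ⟨0, ?_⟩
      simp only [Fin.val_zero, SimpleGraph.Walk.getVert_zero]
      rw [this, SimpleGraph.Walk.getVert_length] at hnx
      exact hnx
  refine ⟨k, fun i => w.getVert i, ?_, ?_, hsurj, ?_⟩
  · intro i
    have hi : (i : ℕ) < w.length := by rw [hk]; omega
    have hadj := (Γ.compl_adj _ _).mp (w.adj_getVert_succ hi)
    simpa using hadj
  · have hi : k < w.length := by omega
    have hadj := (Γ.compl_adj _ _).mp (w.adj_getVert_succ hi)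
    have h1 : w.getVert (k + 1) = w.getVert 0 := by
      rw [← hk, SimpleGraph.Walk.getVert_length, SimpleGraph.Walk.getVert_zero]
    rw [h1] at hadj
    simpa [Fin.last] using hadj
  · rw [Set.eq_empty_iff_forall_notMem]
    intro x hx
    rw [Set.mem_iInter] at hx
    obtain ⟨i, hi⟩ := hsurj x
    have := hx i
    rw [SimpleGraph.mem_neighborSet, hi] at this
    exact Γ.irrefl this
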